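/- Let n ≥ 4, let G be a triangle-free connected graph with χ(G) = k ≥ 3, and let G* = (G ⊠ K_{n-1}) ∨ K_{(n-3)(n-1)} (strong product with K_{n-1}, then join with (n-3)(n-1) universal vertices). Then W^-(G*, K_n) = n-1, i.e., the minimum number of colors in a K_n-WORM coloring of G* is n-1. -/

import Mathlib

open SimpleGraph

/-- A vertex coloring `c` is a `K_n`-WORM coloring of `G` if no set of `n`
pairwise adjacent vertices is monochromatic and none is rainbow. -/
def IsKnWORM {β : Type*} (G : SimpleGraph β) (n : ℕ) (c : β → ℕ) : Prop :=
  ∀ s : Finset β, G.IsNClique n s →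
    (∃ u ∈ s, ∃ v ∈ s, c u ≠ c v) ∧ (∃ u ∈ s, ∃ v ∈ s, u ≠ v ∧ c u = c v)

/-- The strong product `G ⊠ H`. -/
def strongProd {α β : Type*} (G : SimpleGraph α) (H : SimpleGraph β) :
    SimpleGraph (α × β) where
  Adj x y := x ≠ y ∧ (x.1 = y.1 ∨ G.Adj x.1 y.1) ∧ (x.2 = y.2 ∨ H.Adj x.2 y.2)
  symm := ⟨by
    rintro x y ⟨h1, h2, h3⟩
    exact ⟨h1.symm, h2.imp Eq.symm (fun h => G.symm.symm _ _ h), h3.imp Eq.symm (fun h => H.symm.symm _ _ h)⟩⟩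
  loopless := ⟨fun x h => h.1 rfl⟩

/-- The join `G ∨ H`: disjoint union together with all edges between the parts. -/
def graphJoin {α β : Type*} (G : SimpleGraph α) (H : SimpleGraph β) :
    SimpleGraph (α ⊕ β) where
  Adj x y :=
    match x, y with
    | .inl a, .inl b => G.Adj a b
    | .inr a, .inr b => H.Adj a b
    | _, _ => True
  symm := ⟨by rintro (a | a) (b | b) h <;> simp_all [SimpleGraph.adj_comm]⟩
  loopless := ⟨by rintro (a | a) h <;> simp_all⟩

/-- The graph `G* = (G ⊠ K_{n-1}) ∨ K_{(n-3)(n-1)}`. -/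
def Gstar {V : Type*} (G : SimpleGraph V) (n : ℕ) :
    SimpleGraph ((V × Fin (n - 1)) ⊕ Fin ((n - 3) * (n - 1))) :=
  graphJoin (strongProd G (⊤ : SimpleGraph (Fin (n - 1)))) (⊤ : SimpleGraph (Fin ((n - 3) * (n - 1))))

/-- Let `n ≥ 4`, `G` a triangle-free connected graph with `χ(G) = k ≥ 3`, and
`G* = (G ⊠ K_{n-1}) ∨ K_{(n-3)(n-1)}`. Then `W^-(G*, K_n) = n-1`: the minimum
number of colors in a `K_n`-WORM coloring of `G*` equals `n-1`. -/
theorem stmt11 {V : Type} [Fintype V] (n k : ℕ) (hn : 4 ≤ n)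
    (G : SimpleGraph V) (htf : G.CliqueFree 3) (hconn : G.Connected)
    (hk : 3 ≤ k) (hχ : G.chromaticNumber = (k : ℕ∞)) :
    sInf {s | ∃ c : (V × Fin (n - 1)) ⊕ Fin ((n - 3) * (n - 1)) → ℕ,
        IsKnWORM (Gstar G n) n c ∧ (Set.range c).ncard = s} = n - 1 := by
    classical
  have hn1 : 0 < n - 1 := by omega
  have hn3 : 0 < n - 3 := by omega
  -- G has an edge
  obtain ⟨a, b, hab⟩ : ∃ a b, G.Adj a b := by
    by_contra h
    push_neg at h
    have hcol : G.Colorable 1 :=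
      ⟨⟨fun _ => 0, fun {u v} huv => absurd huv (h u v)⟩⟩
    have h1 := hcol.chromaticNumber_le
    rw [hχ] at h1
    have : k ≤ 1 := by exact_mod_cast h1
    omega
  -- the big clique T of size (n-1)^2
  set T : Finset ((V × Fin (n-1)) ⊕ Fin ((n-3)*(n-1))) :=
    ((({a, b} : Finset V) ×ˢ Finset.univ).image Sum.inl) ∪ (Finset.univ.image Sum.inr) with hTdef
  have hmemT : ∀ x, x ∈ T ↔ (∃ v i, x = Sum.inl (v, i) ∧ (v = a ∨ v = b)) ∨ ∃ j, x = Sum.inr j := by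
    intro x
    cases x with
    | inl p => simp [hTdef, Finset.mem_union, Prod.ext_iff]; try tauto
    | inr j => simp [hTdef]
  have hTclique : ∀ x ∈ T, ∀ y ∈ T, x ≠ y → (Gstar G n).Adj x y := by
    intro x hx y hy hxy
    rw [hmemT] at hx hy
    rcases hx with ⟨v, i, rfl, hv⟩ | ⟨j, rfl⟩ <;>
      rcases hy with ⟨w, i', rfl, hw⟩ | ⟨j', rfl⟩
    · have hne : (v, i) ≠ (w, i') := fun h => hxy (by rw [h])
      refine (by simp [Gstar, graphJoin, strongProd]; tauto :
        (Gstar G n).Adj (Sum.inl (v,i)) (Sum.inl (w,i')) ↔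
          (v, i) ≠ (w, i') ∧ (v = w ∨ G.Adj v w)).2 ⟨hne, ?_⟩
      rcases hv with rfl | rfl <;> rcases hw with rfl | rfl
      · exact Or.inl rfl
      · exact Or.inr hab
      · exact Or.inr hab.symm
      · exact Or.inl rfl
    · simp [Gstar, graphJoin]
    · simp [Gstar, graphJoin]
    · have : j ≠ j' := fun h => hxy (by rw [h])
      simpa [Gstar, graphJoin] using this
  have hTcard : T.card = (n-1)*(n-1) := by
    have hdisj : Disjoint ((({a, b} : Finset V) ×ˢ (Finset.univ : Finset (Fin (n-1)))).image Sum.inl)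
        ((Finset.univ : Finset (Fin ((n-3)*(n-1)))).image Sum.inr) := by
      simp [Finset.disjoint_left]
    rw [hTdef, Finset.card_union_of_disjoint hdisj,
      Finset.card_image_of_injective _ Sum.inl_injective,
      Finset.card_image_of_injective _ Sum.inr_injective,
      Finset.card_product]
    have h4 : n - 3 + 2 = n - 1 := by omega
    rw [Finset.card_pair hab.ne, Finset.card_univ, Finset.card_univ,
      Fintype.card_fin, Fintype.card_fin, ← h4]
    ring
  -- lower bound: every WORM coloring uses at least n-1 colors
  have hlow : ∀ m ∈ {s | ∃ c : (V × Fin (n - 1)) ⊕ Fin ((n - 3) * (n - 1)) → ℕ,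
      IsKnWORM (Gstar G n) n c ∧ (Set.range c).ncard = s}, n - 1 ≤ m := by
    rintro m ⟨c, hc, rfl⟩
    have hfib : ∀ bb ∈ T.image c, (T.filter (fun x => c x = bb)).card ≤ n - 1 := by
      intro bb _
      by_contra hgt
      push_neg at hgt
      have hle : n ≤ (T.filter (fun x => c x = bb)).card := by omega
      obtain ⟨s, hsub, hscard⟩ := Finset.exists_subset_card_eq hle
      have hclq : (Gstar G n).IsNClique n s := by
        constructor
        · intro x hx y hy hxy
          exact hTclique x (Finset.mem_of_mem_filter x (hsub hx)) y
            (Finset.mem_of_mem_filter y (hsub hy)) hxy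
        · exact hscard
      obtain ⟨⟨u, hu, v, hv, hne⟩, -⟩ := hc s hclq
      have hu' := (Finset.mem_filter.1 (hsub hu)).2
      have hv' := (Finset.mem_filter.1 (hsub hv)).2
      exact hne (hu'.trans hv'.symm)
    have h1 : T.card ≤ (n-1) * (T.image c).card :=
      Finset.card_le_mul_card_image T (n-1) hfib
    rw [hTcard] at h1
    have h2 : n - 1 ≤ (T.image c).card := Nat.le_of_mul_le_mul_left h1 hn1
    have h3 : (T.image c).card ≤ (Set.range c).ncard := by
      rw [← Set.ncard_coe_finset]
      refine Set.ncard_le_ncard ?_ (Set.finite_range c)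
      intro x hx
      simp only [Finset.coe_image, Set.mem_image] at hx
      obtain ⟨y, _, rfl⟩ := hx
      exact Set.mem_range_self y
    omega
  -- the good coloring with n-1 colors
  set c₀ : (V × Fin (n - 1)) ⊕ Fin ((n - 3) * (n - 1)) → ℕ :=
    (fun x => match x with
      | .inl p => p.2.val
      | .inr j => j.val / (n - 3)) with hc₀def
  have hrange : Set.range c₀ ⊆ ↑(Finset.range (n-1)) := by
    rintro x ⟨y, rfl⟩
    cases y with
    | inl p => simpa [hc₀def] using p.2.isLt
    | inr j =>
      simp only [hc₀def, Finset.coe_range, Set.mem_Iio]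
      exact Nat.div_lt_of_lt_mul (by simpa using j.isLt)
  have hworm : IsKnWORM (Gstar G n) n c₀ := by
    intro s hclq
    constructor
    · -- not monochromatic
      by_contra h
      push_neg at h
      have hpos : 0 < s.card := by rw [hclq.2]; omega
      obtain ⟨u₀, hu₀⟩ := Finset.card_pos.1 hpos
      set m := c₀ u₀ with hm
      have hmono : ∀ x ∈ s, c₀ x = m := fun x hx => (h u₀ hu₀ x hx).symm
      set A := s.filter (fun x => x.isLeft) with hA
      set B := s.filter (fun x => ¬ x.isLeft) with hB
      have hsplit : A.card + B.card = n := by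
        rw [hA, hB, Finset.card_filter_add_card_filter_not, hclq.2]
      -- A has at most 2 elements
      have hAcard : A.card ≤ 2 := by
        have hcardA : A.card = (A.image (Sum.elim Prod.fst (fun _ => a))).card := by
          refine (Finset.card_image_of_injOn ?_).symm
          intro x hx y hy hxy
          obtain ⟨hxs, hxl⟩ := Finset.mem_filter.1 hx
          obtain ⟨hys, hyl⟩ := Finset.mem_filter.1 hy
          cases x with
          | inr j => simp at hxl
          | inl p =>
            cases y with
            | inr j => simp at hyl
            | inl q =>
              have h1 : p.1 = q.1 := by simpa using hxy
              have h2 : (p.2 : ℕ) = (q.2 : ℕ) := by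
                have h3 := (hmono _ hxs).trans (hmono _ hys).symm
                simpa [hc₀def] using h3
              exact congrArg Sum.inl (Prod.ext h1 (Fin.ext h2))
        by_contra hA2
        push_neg at hA2
        have h3le : 3 ≤ (A.image (Sum.elim Prod.fst (fun _ => a))).card := by omega
        obtain ⟨t, htsub, htcard⟩ := Finset.exists_subset_card_eq h3le
        refine htf t ⟨?_, htcard⟩
        intro v hv w hw hvw
        obtain ⟨x, hx, hfx⟩ := Finset.mem_image.1 (htsub hv)
        obtain ⟨y, hy, hfy⟩ := Finset.mem_image.1 (htsub hw)
        obtain ⟨hxs, hxl⟩ := Finset.mem_filter.1 hx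
        obtain ⟨hys, hyl⟩ := Finset.mem_filter.1 hy
        cases x with
        | inr j => simp at hxl
        | inl p =>
          cases y with
          | inr j => simp at hyl
          | inl q =>
            simp only [Sum.elim_inl] at hfx hfy
            have hxyne : (Sum.inl p : (V × Fin (n-1)) ⊕ Fin ((n-3)*(n-1))) ≠ Sum.inl q := by
              intro hcon
              apply hvw
              rw [← hfx, ← hfy, Sum.inl.inj hcon]
            have hadj := hclq.1 (Finset.mem_coe.2 hxs) (Finset.mem_coe.2 hys) hxyne
            have hstep : p ≠ q ∧ (p.1 = q.1 ∨ G.Adj p.1 q.1) := by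
              simp only [Gstar, graphJoin, strongProd] at hadj
              tauto
            rcases hstep.2 with heq | hGadj
            · exact absurd (by rw [← hfx, ← hfy]; exact heq) hvw
            · rw [← hfx, ← hfy]; exact hGadj
      -- B has at most n-3 elements
      have hBcard : B.card ≤ n - 3 := by
        set g : (V × Fin (n - 1)) ⊕ Fin ((n - 3) * (n - 1)) → ℕ :=
          (fun x => match x with | .inl _ => 0 | .inr j => j.val) with hg
        have hinj : ∀ x ∈ B, ∀ y ∈ B, g x = g y → x = y := by
          intro x hx y hy hxy
          obtain ⟨hxs, hxl⟩ := Finset.mem_filter.1 hx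
          obtain ⟨hys, hyl⟩ := Finset.mem_filter.1 hy
          cases x with
          | inl p => simp at hxl
          | inr j =>
            cases y with
            | inl q => simp at hyl
            | inr j' => exact congrArg Sum.inr (Fin.ext hxy)
        have hmaps : ∀ x ∈ B, g x ∈ Finset.Ico ((n-3)*m) ((n-3)*m + (n-3)) := by
          intro x hx
          obtain ⟨hxs, hxl⟩ := Finset.mem_filter.1 hx
          cases x with
          | inl p => simp at hxl
          | inr j =>
            have hdiv : j.val / (n-3) = m := hmono _ hxs
            have h1 := Nat.div_add_mod j.val (n-3)
            have h2 : j.val % (n-3) < n-3 := Nat.mod_lt _ hn3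
            rw [hdiv] at h1
            simp only [hg, Finset.mem_Ico]
            omega
        have := Finset.card_le_card_of_injOn g hmaps hinj
        simpa using this
      omega
    · -- not rainbow
      have hmaps : ∀ x ∈ s, c₀ x ∈ Finset.range (n-1) := fun x _ =>
        Finset.mem_range.2 (by simpa using hrange (Set.mem_range_self x))
      have hlt : (Finset.range (n-1)).card < s.card := by
        rw [hclq.2, Finset.card_range]; omega
      obtain ⟨u, hu, v, hv, hne, heq⟩ :=
        Finset.exists_ne_map_eq_of_card_lt_of_maps_to hlt hmaps
      exact ⟨u, hu, v, hv, hne, heq⟩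
  have hs₀ : (Set.range c₀).ncard ∈ {s | ∃ c : (V × Fin (n - 1)) ⊕ Fin ((n - 3) * (n - 1)) → ℕ,
      IsKnWORM (Gstar G n) n c ∧ (Set.range c).ncard = s} := ⟨c₀, hworm, rfl⟩
  have hup : (Set.range c₀).ncard ≤ n - 1 := by
    calc (Set.range c₀).ncard ≤ (↑(Finset.range (n-1)) : Set ℕ).ncard :=
          Set.ncard_le_ncard hrange (Finset.range (n-1)).finite_toSet
      _ = n - 1 := by rw [Set.ncard_coe_finset, Finset.card_range]
  refine le_antisymm ((Nat.sInf_le hs₀).trans hup) (le_csInf ⟨_, hs₀⟩ hlow)
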